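/- Let q be a prime power and let F be a monic polynomial in F_{q^2}[T]. Then the sum of μ(D) over all monic polynomials D ∈ F_q[T] (viewed inside F_{q^2}[T]) dividing F equals 1 if F has no monic irreducible divisor lying in F_q[T], and equals 0 otherwise. Here μ is the Möbius function on monic polynomials over F_q. -/
import Mathlib

open scoped Classical

/-- The Möbius function on polynomials over F_q: μ(D) = (−1)^k if D is squarefree with k
monic irreducible factors, and μ(D) = 0 if D is not squarefree. -/
noncomputable def polyMoebius {Fq : Type*} [Field Fq] (D : Polynomial Fq) : ℤ :=
  if Squarefree D then
    (-1) ^ (Multiset.card (UniqueFactorizationMonoid.normalizedFactors D)) else 0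

open Polynomial UniqueFactorizationMonoid in
lemma polyAux_finite_degree_lt {K : Type*} [Field K] [Fintype K] (n : ℕ) :
    {p : Polynomial K | p.degree < (n : WithBot ℕ)}.Finite := by
  have h : {p : Polynomial K | p.degree < (n : WithBot ℕ)} =
      Set.range (fun x : Polynomial.degreeLT K n => (x : Polynomial K)) := by
    ext p
    simp only [Set.mem_setOf_eq, Set.mem_range]
    constructor
    · intro hp; exact ⟨⟨p, Polynomial.mem_degreeLT.2 hp⟩, rfl⟩
    · rintro ⟨⟨x, hx⟩, rfl⟩; exact Polynomial.mem_degreeLT.1 hx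
  rw [h]
  have : Finite (Polynomial.degreeLT K n) :=
    Finite.of_equiv _ (Polynomial.degreeLTEquiv K n).toEquiv.symm
  exact Set.finite_range _

open Polynomial UniqueFactorizationMonoid in
lemma polyAux_normalizedFactors_prod {K : Type*} [Field K] (s : Finset (Polynomial K))
    (hs : ∀ p ∈ s, p.Monic ∧ Irreducible p) :
    UniqueFactorizationMonoid.normalizedFactors (∏ p ∈ s, p) = s.val := by
  classical
  induction s using Finset.induction_on with
  | empty => simpa using UniqueFactorizationMonoid.normalizedFactors_one
  | @insert a s ha ih =>
    have haM : a.Monic ∧ Irreducible a := hs a (Finset.mem_insert_self a s)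
    have hs' : ∀ p ∈ s, p.Monic ∧ Irreducible p := fun p hp =>
      hs p (Finset.mem_insert_of_mem hp)
    have hprod0 : (∏ p ∈ s, p) ≠ 0 :=
      Finset.prod_ne_zero_iff.2 fun p hp => (hs' p hp).2.ne_zero
    rw [Finset.prod_insert ha,
      UniqueFactorizationMonoid.normalizedFactors_mul haM.2.ne_zero hprod0,
      UniqueFactorizationMonoid.normalizedFactors_irreducible haM.2, ih hs',
      haM.1.normalize_eq_self, Finset.insert_val_of_notMem ha, Multiset.singleton_add]

/-- Let q be a prime power and F a monic polynomial in F_{q^2}[T]. Then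
Σ_{D ∈ F_q[T] monic, D | F} μ(D) equals 1 if F has no monic irreducible divisor lying in
F_q[T], and 0 otherwise. -/
theorem moebius_sum_detects_no_divisor_in_base {Fq Fq2 : Type*} [Field Fq] [Field Fq2]
    [Fintype Fq] [Fintype Fq2] [Algebra Fq Fq2]
    (q : ℕ) (hq : Fintype.card Fq = q) (hq2 : Fintype.card Fq2 = q ^ 2)
    (F : Polynomial Fq2) (hF : F.Monic) :
    (∑ᶠ D : Polynomial Fq,
        if D.Monic ∧ D.map (algebraMap Fq Fq2) ∣ F then polyMoebius D else 0)
      = if ¬ ∃ P : Polynomial Fq, P.Monic ∧ Irreducible P ∧ P.map (algebraMap Fq Fq2) ∣ F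
        then 1 else 0 := by
  classical
  set φ : Fq →+* Fq2 := algebraMap Fq Fq2 with hφdef
  have hF0 : F ≠ 0 := hF.ne_zero
  -- the set of monic irreducible polynomials over Fq whose image divides F is finite
  have hfin : {P : Polynomial Fq | P.Monic ∧ Irreducible P ∧ P.map φ ∣ F}.Finite := by
    apply (polyAux_finite_degree_lt (F.natDegree + 1)).subset
    rintro P ⟨hPm, -, hPd⟩
    have h1 : (P.map φ).degree ≤ F.degree := Polynomial.degree_le_of_dvd hPd hF0
    rw [Polynomial.degree_map_eq_of_injective φ.injective] at h1
    have h2 : F.degree ≤ (F.natDegree : WithBot ℕ) := Polynomial.degree_le_natDegree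
    simp only [Set.mem_setOf_eq]
    refine lt_of_le_of_lt (h1.trans h2) ?_
    exact_mod_cast WithBot.coe_lt_coe.2 (Nat.lt_succ_self _)
  set T : Finset (Polynomial Fq) := hfin.toFinset with hT
  have hTmem : ∀ P, P ∈ T ↔ P.Monic ∧ Irreducible P ∧ P.map φ ∣ F := by
    intro P; rw [hT, Set.Finite.mem_toFinset]; rfl
  -- products of subsets of T
  set ι : Finset (Polynomial Fq) → Polynomial Fq := fun s => ∏ p ∈ s, p with hι
  have hsub : ∀ s ∈ T.powerset, ∀ p ∈ s, p.Monic ∧ Irreducible p := by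
    intro s hsT p hp
    have := (hTmem p).1 (Finset.mem_powerset.1 hsT hp)
    exact ⟨this.1, this.2.1⟩
  set f : Polynomial Fq → ℤ :=
    fun D => if D.Monic ∧ D.map φ ∣ F then polyMoebius D else 0 with hf
  set V : Finset (Polynomial Fq) := T.powerset.image ι with hV
  -- support of f is contained in V
  have hsupp : Function.support f ⊆ ↑V := by
    intro D hD
    simp only [Function.mem_support, hf] at hD
    by_cases hcond : D.Monic ∧ D.map φ ∣ F
    · obtain ⟨hDm, hDd⟩ := hcond
      rw [if_pos ⟨hDm, hDd⟩] at hD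
      have hsq : Squarefree D := by
        by_contra h
        exact hD (by rw [polyMoebius, if_neg h])
      have hD0 : D ≠ 0 := hDm.ne_zero
      have hnodup : (UniqueFactorizationMonoid.normalizedFactors D).Nodup :=
        (UniqueFactorizationMonoid.squarefree_iff_nodup_normalizedFactors hD0).1 hsq
      set s : Finset (Polynomial Fq) := ⟨UniqueFactorizationMonoid.normalizedFactors D, hnodup⟩ with hs
      have hmemfac : ∀ p ∈ UniqueFactorizationMonoid.normalizedFactors D, p.Monic ∧ Irreducible p ∧ p.map φ ∣ F := by
        intro p hp
        have hirr : Irreducible p := UniqueFactorizationMonoid.irreducible_of_normalized_factor _ hp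
        have hm : p.Monic := by
          have := UniqueFactorizationMonoid.normalize_normalized_factor _ hp
          rw [← this]
          exact Polynomial.monic_normalize hirr.ne_zero
        have hd : p.map φ ∣ F :=
          dvd_trans (Polynomial.map_dvd _ (UniqueFactorizationMonoid.dvd_of_mem_normalizedFactors hp)) hDd
        exact ⟨hm, hirr, hd⟩
      have hsT : s ∈ T.powerset := by
        rw [Finset.mem_powerset]
        intro p hp
        exact (hTmem p).2 (hmemfac p hp)
      have hprod : ι s = D := by
        have h1 : ι s = (UniqueFactorizationMonoid.normalizedFactors D).prod := by
          simp only [hι, Finset.prod_eq_multiset_prod, hs, Multiset.map_id']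
        have h2 : Associated (UniqueFactorizationMonoid.normalizedFactors D).prod D :=
          UniqueFactorizationMonoid.prod_normalizedFactors hD0
        have hmonic : ((UniqueFactorizationMonoid.normalizedFactors D).prod).Monic := by
          have := Polynomial.monic_multiset_prod_of_monic
            (UniqueFactorizationMonoid.normalizedFactors D) id
            (fun p hp => (hmemfac p hp).1)
          simpa using this
        rw [h1]
        exact Polynomial.eq_of_monic_of_associated hmonic hDm h2
      rw [hV]
      exact Finset.mem_coe.2 (Finset.mem_image.2 ⟨s, hsT, hprod⟩)
    · rw [if_neg hcond] at hD; exact absurd rfl hD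
  -- the finsum is a finite sum over V
  rw [finsum_eq_sum_of_support_subset f hsupp]
  -- ι is injective on the powerset of T
  have hinj : Set.InjOn ι ↑T.powerset := by
    intro s hs t ht hst
    have h1 : UniqueFactorizationMonoid.normalizedFactors (ι s) = s.val :=
      polyAux_normalizedFactors_prod s (hsub s hs)
    have h2 : UniqueFactorizationMonoid.normalizedFactors (ι t) = t.val :=
      polyAux_normalizedFactors_prod t (hsub t ht)
    have : s.val = t.val := by rw [← h1, ← h2, hst]
    exact Finset.val_inj.1 this
  rw [hV, Finset.sum_image fun s hs t ht h => hinj hs ht h]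
  -- evaluate each term
  have hterm : ∀ s ∈ T.powerset, f (ι s) = (-1 : ℤ) ^ s.card := by
    intro s hsT
    have hall := hsub s hsT
    have hmonic : (ι s).Monic := Polynomial.monic_prod_of_monic _ _ fun p hp => (hall p hp).1
    have hfac : UniqueFactorizationMonoid.normalizedFactors (ι s) = s.val := polyAux_normalizedFactors_prod s hall
    have hdvd : (ι s).map φ ∣ F := by
      rw [hι, Polynomial.map_prod]
      apply Finset.prod_dvd_of_coprime
      · intro p hp q hq hpq
        have hp' := hall p hp
        have hq' := hall q hq
        have hnd : ¬ p ∣ q := by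
          intro h
          exact hpq (Polynomial.eq_of_monic_of_associated hp'.1 hq'.1
            (hp'.2.associated_of_dvd hq'.2 h))
        have hcop : IsCoprime p q := (hp'.2.coprime_iff_not_dvd).2 hnd
        exact hcop.map (Polynomial.mapRingHom φ)
      · intro p hp
        exact ((hTmem p).1 (Finset.mem_powerset.1 hsT hp)).2.2
    have hne0 : ι s ≠ 0 := hmonic.ne_zero
    have hsq : Squarefree (ι s) := by
      rw [UniqueFactorizationMonoid.squarefree_iff_nodup_normalizedFactors hne0, hfac]
      exact s.nodup
    have hcond : (ι s).Monic ∧ Polynomial.map φ (ι s) ∣ F := ⟨hmonic, hdvd⟩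
    show (if (ι s).Monic ∧ Polynomial.map φ (ι s) ∣ F then polyMoebius (ι s) else 0)
      = (-1 : ℤ) ^ s.card
    rw [if_pos hcond]
    unfold polyMoebius
    rw [if_pos hsq, hfac]
    simp
  rw [Finset.sum_congr rfl hterm, Finset.sum_powerset_neg_one_pow_card]
  -- identify the conditions
  have hiff : T = ∅ ↔
      ¬ ∃ P : Polynomial Fq, P.Monic ∧ Irreducible P ∧ P.map φ ∣ F := by
    rw [hT, Set.Finite.toFinset_eq_empty, Set.eq_empty_iff_forall_notMem]
    simp only [Set.mem_setOf_eq, not_exists]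
  by_cases hcase : T = ∅
  · rw [if_pos hcase, if_pos (hiff.1 hcase)]
  · rw [if_neg hcase, if_neg (fun h => hcase (hiff.2 h))]
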